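/- Let f be an interval map with a unique non-atomic fully supported fair measure μ, and define φ_μ(x) = μ([0,x]). Then φ_μ is a monotone increasing homeomorphism of [0,1], the pushforward of μ under φ_μ is Lebesgue measure, and the conjugated map g = φ_μ ∘ f ∘ φ_μ⁻¹ has Lebesgue measure as a fair measure. More generally, Lebesgue fair models of f correspond bijectively to non-atomic fully supported fair measures of f. -/

import Mathlib

open MeasureTheory
open scoped ENNReal

/-- Invariance of a measure under a map. -/
def InvariantFor (T : ℝ → ℝ) (μ : Measure ℝ) : Prop :=
  ∀ A : Set ℝ, MeasurableSet A → μ (T ⁻¹' A) = μ A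

/-- Fairness of an invariant measure `μ` for a map `T` with respect to a countable partition
`P`: the measure of a set contained in an element of the refinement `𝒜` is divided equally
among the branches of `T⁻¹` defined on it. -/
def FairFor (T : ℝ → ℝ) (P : ℕ → Set ℝ) (μ : Measure ℝ) : Prop :=
  InvariantFor T μ ∧
  ∀ B : Set ℝ, MeasurableSet B →
    (∀ i, B ⊆ T '' P i ∨ B ∩ T '' P i = ∅) →
    ∀ i, B ⊆ T '' P i →
      μ (P i ∩ T ⁻¹' B) = μ B / ({j | B ⊆ T '' P j}.encard : ℝ≥0∞)

/-- Full support on `[0,1]`. -/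
def FullSupportOn (μ : Measure ℝ) : Prop :=
  ∀ U : Set ℝ, IsOpen U → (U ∩ Set.Icc 0 1).Nonempty → 0 < μ U

/-- Non-atomicity. -/
def NonAtomic (μ : Measure ℝ) : Prop := ∀ x : ℝ, μ {x} = 0

/-- A non-atomic fully supported fair probability measure for `(f, P)` carried by `[0,1]`. -/
def GoodFairMeasure (T : ℝ → ℝ) (P : ℕ → Set ℝ) (μ : Measure ℝ) : Prop :=
  IsProbabilityMeasure μ ∧ μ (Set.Icc 0 1) = 1 ∧ FairFor T P μ ∧ NonAtomic μ ∧ FullSupportOn μ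

/-- Extend a strictly monotone self-bijection of `[0,1]` to an order iso of `ℝ` by identity. -/
private lemma goodext_aux (F : ℝ → ℝ)
    (hsm : StrictMonoOn F (Set.Icc 0 1))
    (himg : F '' Set.Icc 0 1 = Set.Icc 0 1) :
    ∃ e : ℝ ≃o ℝ, (∀ x ∈ Set.Icc (0:ℝ) 1, e x = F x) ∧
      (∀ x, x ∉ Set.Icc (0:ℝ) 1 → e x = x) ∧
      (∀ x, x ∈ Set.Icc (0:ℝ) 1 ↔ e x ∈ Set.Icc (0:ℝ) 1) := by
  have hFmem : ∀ x ∈ Set.Icc (0:ℝ) 1, F x ∈ Set.Icc (0:ℝ) 1 := by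
    intro x hx
    rw [← himg]; exact Set.mem_image_of_mem F hx
  set Φ : ℝ → ℝ := fun x => if x ∈ Set.Icc (0:ℝ) 1 then F x else x with hΦ
  have hmono : StrictMono Φ := by
    intro x y hxy
    by_cases hx : x ∈ Set.Icc (0:ℝ) 1 <;> by_cases hy : y ∈ Set.Icc (0:ℝ) 1 <;>
      simp only [hΦ, hx, hy, if_pos, if_neg, if_true, if_false]
    · exact hsm hx hy hxy
    · have h0y : (0:ℝ) ≤ y := le_trans hx.1 hxy.le
      have h1y : 1 < y := by
        by_contra h
        exact hy ⟨h0y, not_lt.mp h⟩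
      exact lt_of_le_of_lt (hFmem x hx).2 h1y
    · have hx0 : x < 0 := by
        by_contra h
        exact hx ⟨not_lt.mp h, hxy.le.trans hy.2⟩
      exact lt_of_lt_of_le hx0 (hFmem y hy).1
    · exact hxy
  have hsurj : Function.Surjective Φ := by
    intro y
    by_cases hy : y ∈ Set.Icc (0:ℝ) 1
    · rw [← himg] at hy
      obtain ⟨x, hx, hxy⟩ := hy
      exact ⟨x, by rw [hΦ]; simp only [hx, if_pos]; exact hxy⟩
    · exact ⟨y, by rw [hΦ]; simp only [hy, if_neg, if_false]⟩
  refine ⟨StrictMono.orderIsoOfSurjective Φ hmono hsurj, ?_, ?_, ?_⟩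
  · intro x hx
    show Φ x = F x
    simp only [hΦ, hx, if_pos]
  · intro x hx
    show Φ x = x
    simp only [hΦ, hx, if_neg, if_false]
  · intro x
    show x ∈ Set.Icc (0:ℝ) 1 ↔ Φ x ∈ Set.Icc (0:ℝ) 1
    by_cases hx : x ∈ Set.Icc (0:ℝ) 1
    · simp only [hΦ, hx, if_pos, true_iff]
      exact hFmem x hx
    · simp only [hΦ, hx, if_neg, if_false]

private lemma measure_inter_Icc {μ : Measure ℝ}
    (h : μ (Set.Icc (0:ℝ) 1)ᶜ = 0) (Z : Set ℝ) : μ Z = μ (Z ∩ Set.Icc 0 1) := by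
  refine le_antisymm ?_ (measure_mono Set.inter_subset_left)
  calc μ Z ≤ μ ((Z ∩ Set.Icc 0 1) ∪ (Set.Icc (0:ℝ) 1)ᶜ) := by
        refine measure_mono ?_
        intro x hx
        by_cases hxI : x ∈ Set.Icc (0:ℝ) 1
        · exact Or.inl ⟨hx, hxI⟩
        · exact Or.inr hxI
    _ ≤ μ (Z ∩ Set.Icc 0 1) + μ (Set.Icc (0:ℝ) 1)ᶜ := measure_union_le _ _
    _ = μ (Z ∩ Set.Icc 0 1) := by rw [h, add_zero]

/-- Continuity of the cdf of a non-atomic finite measure. -/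
private lemma cont_cdf (μ : Measure ℝ) [IsFiniteMeasure μ] (hna : ∀ x : ℝ, μ {x} = 0) :
    Continuous fun x => (μ (Set.Iic x)).toReal := by
  rw [continuous_iff_continuousAt]
  intro x
  have hkey : Filter.Tendsto (fun n : ℕ => μ (Set.Ioc (x - 1/(n+1)) (x + 1/(n+1))))
      Filter.atTop (nhds (μ {x})) := by
    have hinter : (⋂ n : ℕ, Set.Ioc (x - 1/(n+1)) (x + 1/(n+1))) = {x} := by
      ext y
      simp only [Set.mem_iInter, Set.mem_Ioc, Set.mem_singleton_iff]
      constructor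
      · intro h
        have hyx : y ≤ x := by
          refine le_of_forall_pos_le_add (fun ε hε => ?_)
          obtain ⟨n, hn⟩ := exists_nat_one_div_lt hε
          have := (h n).2
          linarith
        have hxy : x ≤ y := by
          refine le_of_forall_pos_le_add (fun ε hε => ?_)
          obtain ⟨n, hn⟩ := exists_nat_one_div_lt hε
          have := (h n).1
          linarith
        linarith
      · rintro rfl
        intro n
        have : (0:ℝ) < 1/(n+1) := by positivity
        constructor <;> linarith
    have := tendsto_measure_iInter_atTop (μ := μ)
      (s := fun n : ℕ => Set.Ioc (x - 1/(n+1)) (x + 1/(n+1)))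
      (fun n => measurableSet_Ioc.nullMeasurableSet)
      (fun n m hnm => by
        refine Set.Ioc_subset_Ioc ?_ ?_
        · have h1 : (1:ℝ)/(m+1) ≤ 1/(n+1) := by
            apply one_div_le_one_div_of_le
            · positivity
            · have := (Nat.cast_le (α := ℝ)).mpr hnm; linarith
          linarith
        · have h1 : (1:ℝ)/(m+1) ≤ 1/(n+1) := by
            apply one_div_le_one_div_of_le
            · positivity
            · have := (Nat.cast_le (α := ℝ)).mpr hnm; linarith
          linarith)
      ⟨0, measure_ne_top μ _⟩
    rwa [hinter] at this
  rw [hna x] at hkey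
  rw [Metric.continuousAt_iff]
  intro ε hε
  have hev : ∀ᶠ n : ℕ in Filter.atTop,
      μ (Set.Ioc (x - 1/(n+1)) (x + 1/(n+1))) < ENNReal.ofReal ε :=
    hkey.eventually_lt_const (by simpa using ENNReal.ofReal_pos.mpr hε)
  obtain ⟨N, hN⟩ := hev.exists
  have hδ : (0:ℝ) < 1/(N+1) := by positivity
  refine ⟨1/(N+1), hδ, fun {y} hy => ?_⟩
  rw [Real.dist_eq] at hy ⊢
  have hsub : ∀ a b : ℝ, a ≤ b → (μ (Set.Iic b)).toReal - (μ (Set.Iic a)).toReal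
      = (μ (Set.Ioc a b)).toReal := by
    intro a b hab
    have : μ (Set.Iic b) = μ (Set.Iic a) + μ (Set.Ioc a b) := by
      rw [← Set.Iic_union_Ioc_eq_Iic hab]
      exact measure_union (by
        refine Set.disjoint_left.mpr (fun z hz hz' => ?_)
        exact absurd hz'.1 (not_lt.mpr hz)) measurableSet_Ioc
    rw [this, ENNReal.toReal_add (measure_ne_top μ _) (measure_ne_top μ _)]
    ring
  have hIocbound : ∀ a b : ℝ, Set.Ioc a b ⊆ Set.Ioc (x - 1/(N+1)) (x + 1/(N+1)) →
      (μ (Set.Ioc a b)).toReal < ε := by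
    intro a b hab
    have h1 : μ (Set.Ioc a b) < ENNReal.ofReal ε := lt_of_le_of_lt (measure_mono hab) hN
    exact ENNReal.toReal_lt_of_lt_ofReal h1
  rcases le_total x y with hxy | hxy
  · have h1 : |(μ (Set.Iic y)).toReal - (μ (Set.Iic x)).toReal|
        = (μ (Set.Ioc x y)).toReal := by
      rw [hsub x y hxy]
      exact abs_of_nonneg ENNReal.toReal_nonneg
    rw [h1]
    refine hIocbound x y (Set.Ioc_subset_Ioc (by linarith) ?_)
    have : y - x < 1/(N+1) := by
      have := abs_lt.mp hy
      linarith [this.2]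
    linarith
  · have h1 : |(μ (Set.Iic y)).toReal - (μ (Set.Iic x)).toReal|
        = (μ (Set.Ioc y x)).toReal := by
      rw [abs_sub_comm, hsub y x hxy]
      exact abs_of_nonneg ENNReal.toReal_nonneg
    rw [h1]
    refine hIocbound y x (Set.Ioc_subset_Ioc ?_ (by linarith))
    have : x - y < 1/(N+1) := by
      have := abs_lt.mp hy
      linarith [this.1]
    linarith

private lemma fair_transport (T S : ℝ → ℝ) (P : ℕ → Set ℝ) (e : ℝ ≃o ℝ)
    (hPsub : ∀ i, P i ⊆ Set.Icc 0 1)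
    (hconj : ∀ x ∈ Set.Icc (0:ℝ) 1, S (e x) = e (T x))
    (μ ν : Measure ℝ)
    (hν : ∀ Z : Set ℝ, ν Z = μ (⇑e ⁻¹' Z))
    (hμI : ∀ Z : Set ℝ, μ Z = μ (Z ∩ Set.Icc 0 1))
    (hfair : FairFor T P μ) :
    FairFor S (fun i => ⇑e '' P i) ν := by
  have hemeas : Measurable (⇑e) := (OrderIso.toHomeomorph e).measurable
  have heinj : Function.Injective (⇑e) := e.injective
  have hesurj : Function.Surjective (⇑e) := e.surjective
  have himg : ∀ j, S '' (⇑e '' P j) = ⇑e '' (T '' P j) := by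
    intro j
    rw [← Set.image_comp, ← Set.image_comp]
    exact Set.image_congr (fun x hx => hconj x (hPsub j hx))
  have hsub_iff : ∀ (B Z : Set ℝ), B ⊆ ⇑e '' Z ↔ ⇑e ⁻¹' B ⊆ Z := by
    intro B Z
    constructor
    · intro h
      intro x hx
      obtain ⟨z, hz, hzx⟩ := h hx
      rwa [← heinj hzx]
    · intro h
      intro b hb
      obtain ⟨x, rfl⟩ := hesurj b
      exact Set.mem_image_of_mem _ (h hb)
  have hdisj_iff : ∀ (B Z : Set ℝ), B ∩ ⇑e '' Z = ∅ ↔ (⇑e ⁻¹' B) ∩ Z = ∅ := by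
    intro B Z
    constructor
    · intro h
      rw [Set.eq_empty_iff_forall_notMem] at h ⊢
      intro x ⟨hx1, hx2⟩
      exact h (e x) ⟨hx1, Set.mem_image_of_mem _ hx2⟩
    · intro h
      rw [Set.eq_empty_iff_forall_notMem] at h ⊢
      rintro b ⟨hb1, z, hz, rfl⟩
      exact h z ⟨hb1, hz⟩
  constructor
  · intro A hA
    have h1 : ν (S ⁻¹' A) = μ (⇑e ⁻¹' (S ⁻¹' A)) := hν _
    have h2 : ⇑e ⁻¹' (S ⁻¹' A) ∩ Set.Icc 0 1
        = (T ⁻¹' (⇑e ⁻¹' A)) ∩ Set.Icc 0 1 := by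
      ext x
      simp only [Set.mem_inter_iff, Set.mem_preimage]
      constructor
      · rintro ⟨h, hxI⟩
        refine ⟨?_, hxI⟩
        rwa [hconj x hxI] at h
      · rintro ⟨h, hxI⟩
        refine ⟨?_, hxI⟩
        rwa [hconj x hxI]
    rw [h1, hμI (⇑e ⁻¹' (S ⁻¹' A)), h2, ← hμI (T ⁻¹' (⇑e ⁻¹' A)),
      hfair.1 _ (hemeas hA), ← hν A]
  · intro B hB hcond i hBi
    set B₀ : Set ℝ := ⇑e ⁻¹' B with hB₀
    have hB₀m : MeasurableSet B₀ := hemeas hB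
    have hcond' : ∀ j, B₀ ⊆ T '' P j ∨ B₀ ∩ T '' P j = ∅ := by
      intro j
      rcases hcond j with h | h
      · left; rw [← hsub_iff]; rwa [himg j] at h
      · right; rw [← hdisj_iff]; rwa [himg j] at h
    have hBi' : B₀ ⊆ T '' P i := by
      rw [← hsub_iff]; rwa [himg i] at hBi
    have hLHS : ⇑e ⁻¹' (⇑e '' P i ∩ S ⁻¹' B) = P i ∩ T ⁻¹' B₀ := by
      ext x
      simp only [Set.mem_preimage, Set.mem_inter_iff, hB₀]
      constructor
      · rintro ⟨h1, h2⟩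
        have hx : x ∈ P i := by
          obtain ⟨z, hz, hzx⟩ := h1
          rwa [← heinj hzx]
        refine ⟨hx, ?_⟩
        rwa [hconj x (hPsub i hx)] at h2
      · rintro ⟨h1, h2⟩
        refine ⟨Set.mem_image_of_mem _ h1, ?_⟩
        rwa [hconj x (hPsub i h1)]
    have hset : {j | B ⊆ S '' (⇑e '' P j)} = {j | B₀ ⊆ T '' P j} := by
      ext j
      simp only [Set.mem_setOf_eq]
      rw [himg j, hsub_iff]
    calc ν (⇑e '' P i ∩ S ⁻¹' B) = μ (P i ∩ T ⁻¹' B₀) := by rw [hν, hLHS]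
      _ = μ B₀ / ({j | B₀ ⊆ T '' P j}.encard : ℝ≥0∞) := hfair.2 B₀ hB₀m hcond' i hBi'
      _ = ν B / ({j | B ⊆ S '' (⇑e '' P j)}.encard : ℝ≥0∞) := by rw [hν B, hset, hB₀]

private lemma leb_open_pos (U : Set ℝ) (hU : IsOpen U) (p : ℝ)
    (hpU : p ∈ U) (hpI : p ∈ Set.Icc (0:ℝ) 1) :
    0 < (volume.restrict (Set.Icc (0:ℝ) 1)) U := by
  obtain ⟨ε, hε, hball⟩ := Metric.isOpen_iff.mp hU p hpU
  set δ : ℝ := min (ε/2) 1 with hδdef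
  have hδ : 0 < δ := lt_min (by linarith) one_pos
  set a : ℝ := max 0 (p - δ) with ha
  set b : ℝ := min 1 (p + δ) with hb
  have hab : a < b := by
    rw [ha, hb]
    apply max_lt <;> apply lt_min
    · exact one_pos
    · linarith [hpI.1]
    · linarith [hpI.2]
    · linarith
  have hsub : Set.Ioo a b ⊆ U ∩ Set.Icc 0 1 := by
    intro z hz
    have hz1 : z > a := hz.1
    have hz2 : z < b := hz.2
    have h0 : (0:ℝ) ≤ z := le_of_lt (lt_of_le_of_lt (le_max_left _ _) hz1)
    have h1 : z ≤ 1 := le_of_lt (lt_of_lt_of_le hz2 (min_le_left _ _))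
    have hdist : |z - p| < ε := by
      have hza : p - δ ≤ a := le_max_right _ _
      have hzb : b ≤ p + δ := min_le_right _ _
      have hδε : δ ≤ ε/2 := min_le_left _ _
      rw [abs_lt]
      constructor <;> nlinarith
    exact ⟨hball (by rwa [Metric.mem_ball, Real.dist_eq]), h0, h1⟩
  rw [Measure.restrict_apply' measurableSet_Icc]
  calc (0:ℝ≥0∞) < volume (Set.Ioo a b) := by
        rw [Real.volume_Ioo]
        exact ENNReal.ofReal_pos.mpr (by linarith)
    _ ≤ volume (U ∩ Set.Icc 0 1) := measure_mono hsub

/-- Let `f` be an interval map with a unique non-atomic fully supported fair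
measure `μ`, and define `φ_μ(x) = μ([0,x])`. Then `φ_μ` is a monotone increasing
homeomorphism of `[0,1]`, the pushforward of `μ` under `φ_μ` is Lebesgue measure on `[0,1]`,
and the conjugated map `g = φ_μ ∘ f ∘ φ_μ⁻¹` has Lebesgue measure as a fair measure (with
respect to the transported partition). More generally, Lebesgue fair models of `f`
correspond bijectively to non-atomic fully supported fair measures of `f`: every Lebesgue
fair model arises from such a measure. -/
theorem lebesgue_fair_model
    (f : ℝ → ℝ) (hmaps : Set.MapsTo f (Set.Icc 0 1) (Set.Icc 0 1))
    (Xp : ℕ → Set ℝ)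
    (hXsub : ∀ i, Xp i ⊆ Set.Icc 0 1)
    (hXm : ∀ i, MeasurableSet (Xp i))
    (hXcover : (⋃ i, Xp i) = Set.Icc 0 1)
    (hXdisj : Pairwise (Function.onFun Disjoint Xp))
    (hXinj : ∀ i, Set.InjOn f (Xp i))
    (hXimg : ∀ i, MeasurableSet (f '' Xp i))
    (μ : Measure ℝ) (hμ : GoodFairMeasure f Xp μ)
    (huniq : ∀ μ' : Measure ℝ, GoodFairMeasure f Xp μ' → μ' = μ) :
    (StrictMonoOn (fun x => (μ (Set.Icc 0 x)).toReal) (Set.Icc 0 1) ∧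
      ContinuousOn (fun x => (μ (Set.Icc 0 x)).toReal) (Set.Icc 0 1) ∧
      (fun x => (μ (Set.Icc 0 x)).toReal) '' Set.Icc 0 1 = Set.Icc 0 1) ∧
    Measure.map (fun x => (μ (Set.Icc 0 x)).toReal) μ = volume.restrict (Set.Icc 0 1) ∧
    (∃ g : ℝ → ℝ, Set.MapsTo g (Set.Icc 0 1) (Set.Icc 0 1) ∧
      (∀ x ∈ Set.Icc (0 : ℝ) 1, g ((μ (Set.Icc 0 x)).toReal) = (μ (Set.Icc 0 (f x))).toReal) ∧
      FairFor g (fun i => (fun x => (μ (Set.Icc 0 x)).toReal) '' Xp i)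
        (volume.restrict (Set.Icc 0 1))) ∧
    (∀ φ' g' : ℝ → ℝ,
      StrictMonoOn φ' (Set.Icc 0 1) → ContinuousOn φ' (Set.Icc 0 1) →
      φ' '' Set.Icc 0 1 = Set.Icc 0 1 →
      (∀ x ∈ Set.Icc (0 : ℝ) 1, g' (φ' x) = φ' (f x)) →
      FairFor g' (fun i => φ' '' Xp i) (volume.restrict (Set.Icc 0 1)) →
      ∃ μ' : Measure ℝ, GoodFairMeasure f Xp μ' ∧
        Measure.map φ' μ' = volume.restrict (Set.Icc 0 1)) := by
  obtain ⟨hprob, hI1, hfairμ, hna, hfs⟩ := hμ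
  haveI := hprob
  set F : ℝ → ℝ := fun x => (μ (Set.Icc 0 x)).toReal with hFdef
  have hIc : μ (Set.Icc (0:ℝ) 1)ᶜ = 0 := by
    rw [measure_compl measurableSet_Icc (measure_ne_top μ _), hI1, measure_univ, tsub_self]
  have hμI : ∀ Z : Set ℝ, μ Z = μ (Z ∩ Set.Icc 0 1) := measure_inter_Icc hIc
  have hIic : ∀ x : ℝ, μ (Set.Iic x) = μ (Set.Icc 0 x) := by
    intro x
    rw [hμI (Set.Iic x), hμI (Set.Icc 0 x)]
    congr 1
    ext y
    simp only [Set.mem_inter_iff, Set.mem_Iic, Set.mem_Icc]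
    constructor
    · rintro ⟨h1, h2, h3⟩; exact ⟨⟨h2, h1⟩, h2, h3⟩
    · rintro ⟨⟨h1, h2⟩, h3, h4⟩; exact ⟨h2, h3, h4⟩
  have hcont : Continuous F := by
    have h := cont_cdf μ hna
    have heq : F = fun x => (μ (Set.Iic x)).toReal := by
      funext x
      show (μ (Set.Icc 0 x)).toReal = (μ (Set.Iic x)).toReal
      rw [hIic]
    rwa [heq]
  have hF01 : ∀ x : ℝ, F x ∈ Set.Icc (0:ℝ) 1 := by
    intro x
    refine ⟨ENNReal.toReal_nonneg, ?_⟩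
    have h1 : μ (Set.Icc 0 x) ≤ 1 := prob_le_one
    calc F x ≤ (1:ℝ≥0∞).toReal := ENNReal.toReal_mono ENNReal.one_ne_top h1
      _ = 1 := by simp
  have hF0 : F 0 = 0 := by
    show (μ (Set.Icc (0:ℝ) 0)).toReal = 0
    rw [Set.Icc_self, hna 0, ENNReal.toReal_zero]
  have hF1 : F 1 = 1 := by
    show (μ (Set.Icc (0:ℝ) 1)).toReal = 1
    rw [hI1, ENNReal.toReal_one]
  have hsm : StrictMonoOn F (Set.Icc 0 1) := by
    intro x hx y hy hxy
    have hdisj : Disjoint (Set.Icc (0:ℝ) x) (Set.Ioc x y) :=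
      Set.disjoint_left.mpr fun a ha ha' => absurd ha'.1 (not_lt.mpr ha.2)
    have hsplit : μ (Set.Icc 0 y) = μ (Set.Icc 0 x) + μ (Set.Ioc x y) := by
      rw [← Set.Icc_union_Ioc_eq_Icc hx.1 hxy.le]
      exact measure_union hdisj measurableSet_Ioc
    have hpos : 0 < μ (Set.Ioc x y) := by
      refine lt_of_lt_of_le (hfs (Set.Ioo x y) isOpen_Ioo
        ⟨(x+y)/2, ⟨by linarith, by linarith⟩,
          ⟨by linarith [hx.1], by linarith [hy.2]⟩⟩) (measure_mono Set.Ioo_subset_Ioc_self)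
    show F x < F y
    show (μ (Set.Icc 0 x)).toReal < (μ (Set.Icc 0 y)).toReal
    rw [hsplit, ENNReal.toReal_add (measure_ne_top μ _) (measure_ne_top μ _)]
    have h2 : 0 < (μ (Set.Ioc x y)).toReal := ENNReal.toReal_pos hpos.ne' (measure_ne_top μ _)
    linarith
  have himgF : F '' Set.Icc 0 1 = Set.Icc 0 1 := by
    apply Set.Subset.antisymm
    · rintro _ ⟨x, hx, rfl⟩; exact hF01 x
    · have h := intermediate_value_Icc (zero_le_one) hcont.continuousOn
      rwa [hF0, hF1] at h
  obtain ⟨e, heI, heO, hememb⟩ := goodext_aux F hsm himgF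
  have hEm : MeasurableEmbedding (⇑e) := (OrderIso.toHomeomorph e).measurableEmbedding
  have hemeas : Measurable (⇑e) := hEm.measurable
  have hae : F =ᵐ[μ] ⇑e := by
    rw [Filter.EventuallyEq, ae_iff]
    refine measure_mono_null ?_ hIc
    intro x hx hxI
    exact hx ((heI x hxI).symm)
  have hmapF : Measure.map F μ = Measure.map (⇑e) μ := Measure.map_congr hae
  have he0 : e 0 = 0 := by
    rw [heI 0 (by norm_num : (0:ℝ) ∈ Set.Icc (0:ℝ) 1), hF0]
  have part2 : Measure.map F μ = volume.restrict (Set.Icc 0 1) := by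
    rw [hmapF]
    haveI : IsProbabilityMeasure (Measure.map (⇑e) μ) :=
      Measure.isProbabilityMeasure_map hemeas.aemeasurable
    refine Measure.ext_of_Iic _ _ (fun t => ?_)
    rw [hEm.map_apply]
    have hpre : ⇑e ⁻¹' Set.Iic t = Set.Iic (e.symm t) := by
      ext x
      simp only [Set.mem_preimage, Set.mem_Iic]
      constructor
      · intro h
        have h2 := e.symm.monotone h
        rwa [OrderIso.symm_apply_apply] at h2
      · intro h
        have h2 := e.monotone h
        rwa [OrderIso.apply_symm_apply] at h2
    rw [hpre, hIic (e.symm t), Measure.restrict_apply' measurableSet_Icc]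
    have hts : e (e.symm t) = t := e.apply_symm_apply t
    rcases lt_or_ge t 0 with ht | ht
    · have hs0 : e.symm t < 0 := by
        by_contra h
        push_neg at h
        have h2 : e 0 ≤ e (e.symm t) := e.monotone h
        rw [he0, hts] at h2
        linarith
      have h1 : μ (Set.Icc 0 (e.symm t)) = 0 := by
        rw [Set.Icc_eq_empty (not_le.mpr hs0)]
        simp
      have h2 : Set.Iic t ∩ Set.Icc (0:ℝ) 1 = ∅ := by
        ext y
        simp only [Set.mem_inter_iff, Set.mem_Iic, Set.mem_Icc,
          Set.mem_empty_iff_false, iff_false, not_and]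
        intro h3 h4
        intro h5
        linarith
      rw [h1, h2]
      simp
    · rcases le_or_gt t 1 with ht1 | ht1
      · have hsI : e.symm t ∈ Set.Icc (0:ℝ) 1 := by
          by_contra h
          have heq2 : e.symm t = t := (heO (e.symm t) h).symm.trans hts
          apply h
          rw [heq2]
          exact ⟨ht, ht1⟩
        have hFs : F (e.symm t) = t := by rw [← heI (e.symm t) hsI, hts]
        have h1 : μ (Set.Icc 0 (e.symm t)) = ENNReal.ofReal t := by
          have h3 : (μ (Set.Icc 0 (e.symm t))).toReal = t := hFs
          conv_rhs => rw [← h3]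
          exact (ENNReal.ofReal_toReal (measure_ne_top μ _)).symm
        have h2 : Set.Iic t ∩ Set.Icc (0:ℝ) 1 = Set.Icc 0 t := by
          ext y
          simp only [Set.mem_inter_iff, Set.mem_Iic, Set.mem_Icc]
          constructor
          · rintro ⟨a, b, c⟩; exact ⟨b, a⟩
          · rintro ⟨a, b⟩; exact ⟨b, a, by linarith⟩
        rw [h1, h2, Real.volume_Icc, sub_zero]
      · have hs1 : 1 < e.symm t := by
          by_contra h
          push_neg at h
          have ht1' : t ≤ 1 := by
            by_cases hsI : e.symm t ∈ Set.Icc (0:ℝ) 1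
            · rw [← hts, heI (e.symm t) hsI]
              exact (hF01 (e.symm t)).2
            · rw [← hts, heO (e.symm t) hsI]
              exact h
          linarith
        have h1 : μ (Set.Icc (0:ℝ) (e.symm t)) = 1 := by
          refine le_antisymm prob_le_one ?_
          rw [← hI1]
          exact measure_mono (fun y hy => ⟨hy.1, le_trans hy.2 hs1.le⟩)
        have h2 : Set.Iic t ∩ Set.Icc (0:ℝ) 1 = Set.Icc 0 1 := by
          ext y
          simp only [Set.mem_inter_iff, Set.mem_Iic, Set.mem_Icc]
          constructor
          · rintro ⟨_, b⟩; exact b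
          · rintro ⟨a, b⟩; exact ⟨by linarith, a, b⟩
        rw [h1, h2, Real.volume_Icc]
        norm_num
  have hνval : ∀ Z : Set ℝ, (volume.restrict (Set.Icc (0:ℝ) 1)) Z = μ (⇑e ⁻¹' Z) := by
    intro Z
    rw [← part2, hmapF, hEm.map_apply]
  refine ⟨⟨hsm, hcont.continuousOn, himgF⟩, part2,
    ⟨fun y => e (f (e.symm y)), ?_, ?_, ?_⟩, ?_⟩
  · intro y hy
    have h1 : e.symm y ∈ Set.Icc (0:ℝ) 1 := by
      rw [hememb (e.symm y), e.apply_symm_apply]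
      exact hy
    exact (hememb _).mp (hmaps h1)
  · intro x hx
    show e (f (e.symm (F x))) = F (f x)
    rw [← heI x hx, e.symm_apply_apply, ← heI (f x) (hmaps hx)]
  · have h := fair_transport f (fun y => e (f (e.symm y))) Xp e hXsub
      (fun x _ => by show e (f (e.symm (e x))) = e (f x); rw [e.symm_apply_apply])
      μ (volume.restrict (Set.Icc 0 1)) hνval hμI hfairμ
    have hQ : (fun i => F '' Xp i) = (fun i => ⇑e '' Xp i) := by
      funext i
      exact Set.image_congr (fun x hx => (heI x (hXsub i hx)).symm)
    show FairFor _ (fun i => F '' Xp i) _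
    rw [hQ]
    exact h
  · intro φ' g' hsm' hcont' himg' hconj' hfair'
    obtain ⟨e', he'I, he'O, he'memb⟩ := goodext_aux φ' hsm' himg'
    have hE'symm : MeasurableEmbedding (⇑e'.symm) :=
      (OrderIso.toHomeomorph e'.symm).measurableEmbedding
    have he'meas : Measurable (⇑e') := (OrderIso.toHomeomorph e').measurable
    have hνI1 : (volume.restrict (Set.Icc (0:ℝ) 1)) (Set.Icc (0:ℝ) 1) = 1 := by
      rw [Measure.restrict_apply' measurableSet_Icc, Set.inter_self, Real.volume_Icc]
      norm_num
    haveI hνprob : IsProbabilityMeasure (volume.restrict (Set.Icc (0:ℝ) 1)) := by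
      constructor
      rw [Measure.restrict_apply_univ, Real.volume_Icc]
      norm_num
    set μ' := Measure.map (⇑e'.symm) (volume.restrict (Set.Icc (0:ℝ) 1)) with hμ'def
    have hμ'val : ∀ Z : Set ℝ, μ' Z = (volume.restrict (Set.Icc (0:ℝ) 1)) (⇑e'.symm ⁻¹' Z) :=
      fun Z => hE'symm.map_apply _ Z
    have hνIZ : ∀ Z : Set ℝ,
        (volume.restrict (Set.Icc (0:ℝ) 1)) Z
          = (volume.restrict (Set.Icc (0:ℝ) 1)) (Z ∩ Set.Icc 0 1) := by
      intro Z
      rw [Measure.restrict_apply' measurableSet_Icc, Measure.restrict_apply' measurableSet_Icc,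
        Set.inter_assoc, Set.inter_self]
    have he'smemb : ∀ x : ℝ, x ∈ Set.Icc (0:ℝ) 1 ↔ e'.symm x ∈ Set.Icc (0:ℝ) 1 := by
      intro x
      have h := he'memb (e'.symm x)
      rw [e'.apply_symm_apply] at h
      exact h.symm
    have hpreI : ⇑e'.symm ⁻¹' (Set.Icc (0:ℝ) 1) = Set.Icc 0 1 := by
      ext x
      rw [Set.mem_preimage]
      exact (he'smemb x).symm
    haveI hμ'prob : IsProbabilityMeasure μ' :=
      Measure.isProbabilityMeasure_map hE'symm.measurable.aemeasurable
    have hconjI : ∀ x ∈ Set.Icc (0:ℝ) 1, g' (e' x) = e' (f x) := by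
      intro x hx
      rw [he'I x hx, he'I (f x) (hmaps hx)]
      exact hconj' x hx
    refine ⟨μ', ⟨hμ'prob, ?_, ?_, ?_, ?_⟩, ?_⟩
    · rw [hμ'val, hpreI]
      exact hνI1
    · -- FairFor f Xp μ'
      have hQeq : (fun i => φ' '' Xp i) = (fun i => ⇑e' '' Xp i) := by
        funext i
        exact Set.image_congr (fun x hx => (he'I x (hXsub i hx)).symm)
      rw [hQeq] at hfair'
      have hPsub : ∀ i, ⇑e' '' Xp i ⊆ Set.Icc (0:ℝ) 1 := by
        intro i y hy
        obtain ⟨x, hx, rfl⟩ := hy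
        exact (he'memb x).mp (hXsub i hx)
      have hconjT : ∀ y ∈ Set.Icc (0:ℝ) 1, f (e'.symm y) = e'.symm (g' y) := by
        intro y hy
        have hxI : e'.symm y ∈ Set.Icc (0:ℝ) 1 := (he'smemb y).mp hy
        have h := hconjI (e'.symm y) hxI
        rw [e'.apply_symm_apply] at h
        rw [h, e'.symm_apply_apply]
      have h := fair_transport g' f (fun i => ⇑e' '' Xp i) e'.symm hPsub hconjT
        (volume.restrict (Set.Icc 0 1)) μ' hμ'val hνIZ hfair'
      have h' : FairFor f (fun i => ⇑e'.symm '' (⇑e' '' Xp i)) μ' := h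
      have hXQ : (fun i => ⇑e'.symm '' (⇑e' '' Xp i)) = Xp := by
        funext i
        ext x
        constructor
        · rintro ⟨y, ⟨z, hz, rfl⟩, rfl⟩
          rwa [e'.symm_apply_apply]
        · intro hx
          exact ⟨e' x, Set.mem_image_of_mem _ hx, e'.symm_apply_apply x⟩
      rwa [hXQ] at h'
    · -- NonAtomic
      intro x
      rw [hμ'val]
      have hsing : ⇑e'.symm ⁻¹' {x} = {e' x} := by
        ext y
        simp only [Set.mem_preimage, Set.mem_singleton_iff]
        constructor
        · intro h
          rw [← h, e'.apply_symm_apply]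
        · rintro rfl
          exact e'.symm_apply_apply x
      rw [hsing, Measure.restrict_apply' measurableSet_Icc]
      exact measure_mono_null Set.inter_subset_left Real.volume_singleton
    · -- Full support
      rintro U hU ⟨p, hpU, hpI⟩
      rw [hμ'val]
      have him : ⇑e'.symm ⁻¹' U = ⇑e' '' U := by
        ext y
        simp only [Set.mem_preimage]
        constructor
        · intro h
          exact ⟨e'.symm y, h, e'.apply_symm_apply y⟩
        · rintro ⟨x, hx, rfl⟩
          rwa [e'.symm_apply_apply]
      rw [him]
      exact leb_open_pos _ ((OrderIso.toHomeomorph e').isOpenMap U hU) (e' p)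
        (Set.mem_image_of_mem _ hpU) ((he'memb p).mp hpI)
    · -- map φ' μ' = volume.restrict
      have haeφ : φ' =ᵐ[μ'] ⇑e' := by
        rw [Filter.EventuallyEq, ae_iff]
        have hsubn : {x | ¬ φ' x = e' x} ⊆ (Set.Icc (0:ℝ) 1)ᶜ :=
          fun x hx hxI => hx ((he'I x hxI).symm)
        refine measure_mono_null hsubn ?_
        rw [hμ'val, Set.preimage_compl, hpreI, Measure.restrict_apply' measurableSet_Icc,
          Set.compl_inter_self]
        exact measure_empty
      rw [Measure.map_congr haeφ, hμ'def, Measure.map_map he'meas hE'symm.measurable]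
      have hcompid : ⇑e' ∘ ⇑e'.symm = id := funext fun y => e'.apply_symm_apply y
      rw [hcompid, Measure.map_id]
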